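/- Let (A, m, k) be a finite local k-algebra with a self-dual finite A-module M (i.e., M ≅ M^∨ as A-modules), and let s be the largest integer with m^s M ≠ 0. For 0 ≤ δ ≤ s−2 and each i, the spaces Q(δ)_i = (m^i M ∩ (0:_M m^{s−i−δ+1})) / (m^{i+1}M ∩ (0:_M m^{s−i−δ+1}) + m^i M ∩ (0:_M m^{s−i−δ})) satisfy dim_k Q(δ)_i = dim_k Q(δ)_{s−δ−i}. -/

import Mathlib

/-- `(0 :_M J)`, the submodule of elements of `M` annihilated by the ideal `J`. -/
def torsIn {A M : Type*} [CommRing A] [AddCommGroup M] [Module A M] (J : Ideal A) :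
    Submodule A M where
  carrier := {x | ∀ a ∈ J, a • x = 0}
  add_mem' := by
    intro x y hx hy a ha
    rw [smul_add, hx a ha, hy a ha, add_zero]
  zero_mem' := by
    intro a _
    rw [smul_zero]
  smul_mem' := by
    intro c x hx a ha
    rw [← mul_smul, mul_comm, mul_smul, hx a ha, smul_zero]

/-- `dim_k Q(δ)_i` for a module `M` over a local algebra `(A, m, k)` of socle degree `s`:
the dimension of
`(m^i M ∩ (0:_M m^{s−i−δ+1})) / (m^{i+1}M ∩ (0:_M m^{s−i−δ+1}) + m^i M ∩ (0:_M m^{s−i−δ}))`,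
computed as a difference of `k`-dimensions (negative exponents truncated to `0`). -/
noncomputable def modDelta (k A M : Type*) [Field k] [CommRing A] [Algebra k A]
    [IsLocalRing A] [AddCommGroup M] [Module A M] [Module k M] [IsScalarTower k A M]
    (s δ i : ℕ) : ℕ :=
  let m : Ideal A := IsLocalRing.maximalIdeal A
  let tors : ℤ → Submodule A M := fun j => torsIn (m ^ j.toNat)
  Module.finrank k
      (((m ^ i • (⊤ : Submodule A M)) ⊓ tors ((s : ℤ) - i - δ + 1)).restrictScalars k) -
    Module.finrank k
      ((((m ^ (i + 1) • (⊤ : Submodule A M)) ⊓ tors ((s : ℤ) - i - δ + 1)) ⊔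
        ((m ^ i • (⊤ : Submodule A M)) ⊓ tors ((s : ℤ) - i - δ))).restrictScalars k)

set_option linter.unusedSectionVars false
section Perp
variable {k A M : Type*} [Field k] [CommRing A] [Algebra k A]
    [AddCommGroup M] [Module A M] [Module k M] [IsScalarTower k A M]
    [FiniteDimensional k M]
    (φ : M →ₗ[k] (M →ₗ[k] k))

def rperp (hAlin : ∀ (a : A) (x y : M), φ (a • x) y = φ x (a • y))
    (N : Submodule A M) : Submodule A M where
  carrier := {y | ∀ x ∈ N, φ x y = 0}
  add_mem' := by
    intro y z hy hz x hx
    rw [map_add, hy x hx, hz x hx, add_zero]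
  zero_mem' := by intro x _; rw [map_zero]
  smul_mem' := by
    intro a y hy x hx
    rw [← hAlin, hy _ (N.smul_mem a hx)]

variable (hAlin : ∀ (a : A) (x y : M), φ (a • x) y = φ x (a • y))

lemma mem_rperp {N : Submodule A M} {y : M} :
    y ∈ rperp φ hAlin N ↔ ∀ x ∈ N, φ x y = 0 := Iff.rfl

lemma mem_torsIn {J : Ideal A} {x : M} : x ∈ (torsIn J : Submodule A M) ↔ ∀ a ∈ J, a • x = 0 :=
  Iff.rfl

lemma restrictScalars_rperp (N : Submodule A M) :
    (rperp φ hAlin N).restrictScalars k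
      = Submodule.dualCoannihilator ((N.restrictScalars k).map φ) := by
  ext y
  simp only [Submodule.restrictScalars_mem, mem_rperp, Submodule.mem_dualCoannihilator,
    Submodule.mem_map]
  constructor
  · rintro h f ⟨x, hx, rfl⟩; exact h x hx
  · intro h x hx; exact h (φ x) ⟨x, hx, rfl⟩

lemma rperp_finrank (hbij : Function.Bijective φ) (N : Submodule A M) :
    Module.finrank k ((rperp φ hAlin N).restrictScalars k)
      + Module.finrank k (N.restrictScalars k) = Module.finrank k M := by
  rw [restrictScalars_rperp]
  have hmap : Module.finrank k ((N.restrictScalars k).map φ)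
      = Module.finrank k (N.restrictScalars k) :=
    (LinearEquiv.finrank_eq (Submodule.equivMapOfInjective φ hbij.injective
      (N.restrictScalars k))).symm
  have key : Module.finrank k ((N.restrictScalars k).map φ)
      + Module.finrank k (Submodule.dualCoannihilator ((N.restrictScalars k).map φ))
      = Module.finrank k M :=
    Subspace.finrank_add_finrank_dualCoannihilator_eq _
  omega

lemma rperp_anti {N P : Submodule A M} (h : N ≤ P) :
    rperp φ hAlin P ≤ rperp φ hAlin N := fun _ hy x hx => hy x (h hx)

lemma rperp_sup (N P : Submodule A M) :
    rperp φ hAlin (N ⊔ P) = rperp φ hAlin N ⊓ rperp φ hAlin P := by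
  apply le_antisymm
  · exact le_inf (rperp_anti φ hAlin le_sup_left) (rperp_anti φ hAlin le_sup_right)
  · rintro y ⟨hy1, hy2⟩ x hx
    rcases Submodule.mem_sup.mp hx with ⟨a, ha, b, hb, rfl⟩
    rw [map_add, LinearMap.add_apply, hy1 a ha, hy2 b hb, add_zero]

lemma restrictScalars_sup (N P : Submodule A M) :
    (N ⊔ P).restrictScalars k = N.restrictScalars k ⊔ P.restrictScalars k := by
  ext x
  simp only [Submodule.restrictScalars_mem, Submodule.mem_sup]

lemma restrictScalars_inf (N P : Submodule A M) :
    (N ⊓ P).restrictScalars k = N.restrictScalars k ⊓ P.restrictScalars k := rfl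

lemma rperp_inf (hbij : Function.Bijective φ) (N P : Submodule A M) :
    rperp φ hAlin (N ⊓ P) = rperp φ hAlin N ⊔ rperp φ hAlin P := by
  have hle : rperp φ hAlin N ⊔ rperp φ hAlin P ≤ rperp φ hAlin (N ⊓ P) :=
    sup_le (rperp_anti φ hAlin inf_le_left) (rperp_anti φ hAlin inf_le_right)
  have hd : Module.finrank k ((rperp φ hAlin (N ⊓ P)).restrictScalars k)
      ≤ Module.finrank k ((rperp φ hAlin N ⊔ rperp φ hAlin P).restrictScalars k) := by
    have h1 := rperp_finrank φ hAlin hbij N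
    have h2 := rperp_finrank φ hAlin hbij P
    have h3 := rperp_finrank φ hAlin hbij (N ⊓ P)
    have h4 := rperp_finrank φ hAlin hbij (N ⊔ P)
    have h5 := Submodule.finrank_sup_add_finrank_inf_eq
      (N.restrictScalars k) (P.restrictScalars k)
    have h6 := Submodule.finrank_sup_add_finrank_inf_eq
      ((rperp φ hAlin N).restrictScalars k) ((rperp φ hAlin P).restrictScalars k)
    rw [← restrictScalars_sup, ← restrictScalars_inf, ← rperp_sup φ hAlin] at h6
    rw [← restrictScalars_sup] at h5
    rw [← restrictScalars_inf] at h5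
    omega
  have hle' : (rperp φ hAlin (N ⊓ P)).restrictScalars k
      ≤ (rperp φ hAlin N ⊔ rperp φ hAlin P).restrictScalars k := by
    rw [Submodule.eq_of_le_of_finrank_le (fun x hx => hle hx :
      ((rperp φ hAlin N ⊔ rperp φ hAlin P).restrictScalars k : Submodule k M)
        ≤ (rperp φ hAlin (N ⊓ P)).restrictScalars k) hd]
  exact le_antisymm (fun x hx => hle' hx) hle

lemma rperp_smul_top (hbij : Function.Bijective φ) (J : Ideal A) :
    rperp φ hAlin (J • (⊤ : Submodule A M)) = torsIn J := by
  apply le_antisymm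
  · intro y hy a ha
    have hz : ∀ x : M, φ x (a • y) = 0 := fun x => by
      rw [← hAlin]
      exact hy _ (Submodule.smul_mem_smul ha Submodule.mem_top)
    have hall : ∀ f : Module.Dual k M, f (a • y) = 0 := by
      intro f
      obtain ⟨x, rfl⟩ := hbij.surjective f
      exact hz x
    exact (Module.forall_dual_apply_eq_zero_iff k _).mp hall
  · intro y hy x hx
    refine Submodule.smul_induction_on hx ?_ ?_
    · intro a ha n _
      rw [hAlin, hy a ha, map_zero]
    · intro x1 x2 h1 h2
      rw [map_add, LinearMap.add_apply, h1, h2, add_zero]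

lemma rperp_torsIn (hbij : Function.Bijective φ) (J : Ideal A) :
    rperp φ hAlin (torsIn J) = J • (⊤ : Submodule A M) := by
  have hle : J • (⊤ : Submodule A M) ≤ rperp φ hAlin (torsIn J) := by
    intro y hy x hx
    refine Submodule.smul_induction_on hy ?_ ?_
    · intro a ha n _
      rw [← hAlin, hx a ha, map_zero, LinearMap.zero_apply]
    · intro y1 y2 h1 h2
      rw [map_add, h1, h2, add_zero]
  have h1 := rperp_finrank φ hAlin hbij (J • (⊤ : Submodule A M))
  have h2 := rperp_finrank φ hAlin hbij (torsIn J : Submodule A M)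
  rw [rperp_smul_top φ hAlin hbij] at h1
  have hd : Module.finrank k ((rperp φ hAlin (torsIn J)).restrictScalars k)
      ≤ Module.finrank k ((J • (⊤ : Submodule A M)).restrictScalars k) := by omega
  exact (Submodule.restrictScalars_injective k A M
    (Submodule.eq_of_le_of_finrank_le (fun x hx => hle hx) hd)).symm

end Perp

/-- let `(A, m, k)` be a finite local `k`-algebra and `M` a self-dual
finite `A`-module (`M ≅ M^∨` as `A`-modules, the dual carrying the contraction action),
with `s` the largest integer such that `m^s M ≠ 0`. Then for `0 ≤ δ ≤ s − 2` the graded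
pieces `Q(δ)_i` satisfy `dim_k Q(δ)_i = dim_k Q(δ)_{s−δ−i}`. -/
theorem selfdual_module_delta_symmetric {k A M : Type*} [Field k] (h2 : (2 : k) ≠ 0)
    [CommRing A] [Algebra k A] [FiniteDimensional k A] [IsLocalRing A]
    [AddCommGroup M] [Module A M] [Module k M] [IsScalarTower k A M]
    [FiniteDimensional k M]
    (φ : M →ₗ[k] (M →ₗ[k] k))
    (hbij : Function.Bijective φ)
    (hAlin : ∀ (a : A) (x y : M), φ (a • x) y = φ x (a • y))
    (s : ℕ)
    (hs : (IsLocalRing.maximalIdeal A) ^ s • (⊤ : Submodule A M) ≠ ⊥)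
    (hs' : (IsLocalRing.maximalIdeal A) ^ (s + 1) • (⊤ : Submodule A M) = ⊥)
    (δ : ℕ) (hδ : δ + 2 ≤ s) (i : ℕ) (hi : i ≤ s - δ) :
    modDelta k A M s δ i = modDelta k A M s δ (s - δ - i) := by
  classical
  set j := s - δ - i with hj
  have e1 : ((s : ℤ) - i - δ + 1).toNat = j + 1 := by omega
  have e2 : ((s : ℤ) - i - δ).toNat = j := by omega
  have e3 : ((s : ℤ) - j - δ + 1).toNat = i + 1 := by omega
  have e4 : ((s : ℤ) - j - δ).toNat = i := by omega
  simp only [modDelta]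
  beta_reduce
  rw [e1, e2, e3, e4]
  set mI : Ideal A := IsLocalRing.maximalIdeal A with hmI
  have hNeq : rperp φ hAlin ((mI ^ i • ⊤) ⊓ torsIn (mI ^ (j + 1)))
      = torsIn (mI ^ i) ⊔ (mI ^ (j + 1) • ⊤) := by
    rw [rperp_inf φ hAlin hbij, rperp_smul_top φ hAlin hbij, rperp_torsIn φ hAlin hbij]
  have hDeq : rperp φ hAlin
        (((mI ^ (i + 1) • ⊤) ⊓ torsIn (mI ^ (j + 1))) ⊔ ((mI ^ i • ⊤) ⊓ torsIn (mI ^ j)))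
      = (torsIn (mI ^ (i + 1)) ⊔ (mI ^ (j + 1) • ⊤)) ⊓ (torsIn (mI ^ i) ⊔ (mI ^ j • ⊤)) := by
    rw [rperp_sup φ hAlin, rperp_inf φ hAlin hbij, rperp_inf φ hAlin hbij,
      rperp_smul_top φ hAlin hbij, rperp_torsIn φ hAlin hbij,
      rperp_smul_top φ hAlin hbij, rperp_torsIn φ hAlin hbij]
  have hN := rperp_finrank φ hAlin hbij ((mI ^ i • ⊤) ⊓ torsIn (mI ^ (j + 1)))
  have hD := rperp_finrank φ hAlin hbij
    (((mI ^ (i + 1) • ⊤) ⊓ torsIn (mI ^ (j + 1))) ⊔ ((mI ^ i • ⊤) ⊓ torsIn (mI ^ j)))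
  rw [hNeq] at hN
  rw [hDeq] at hD
  have S1 := restrictScalars_sup (k := k) (torsIn (mI ^ i) : Submodule A M) (mI ^ (j + 1) • ⊤)
  have S2 := restrictScalars_sup (k := k) (torsIn (mI ^ (i + 1)) : Submodule A M) (mI ^ (j + 1) • ⊤)
  have S3 := restrictScalars_sup (k := k) (torsIn (mI ^ i) : Submodule A M) (mI ^ j • ⊤)
  have S4 := restrictScalars_sup (k := k)
    ((mI ^ (i + 1) • ⊤ : Submodule A M) ⊓ torsIn (mI ^ (j + 1))) ((mI ^ i • ⊤) ⊓ torsIn (mI ^ j))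
  have S5 := restrictScalars_sup (k := k)
    ((mI ^ (j + 1) • ⊤ : Submodule A M) ⊓ torsIn (mI ^ (i + 1))) ((mI ^ j • ⊤) ⊓ torsIn (mI ^ i))
  rw [restrictScalars_inf] at hN hD
  rw [restrictScalars_inf, restrictScalars_inf]
  rw [S1] at hN
  rw [S2, S3, S4] at hD
  rw [S4, S5]
  rw [restrictScalars_inf, restrictScalars_inf] at hD
  rw [restrictScalars_inf, restrictScalars_inf, restrictScalars_inf, restrictScalars_inf]
  set p := (torsIn (mI ^ i) : Submodule A M).restrictScalars k with hp
  set q := (torsIn (mI ^ (i + 1)) : Submodule A M).restrictScalars k with hq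
  set u := ((mI ^ j • ⊤ : Submodule A M)).restrictScalars k with hu
  set v := ((mI ^ (j + 1) • ⊤ : Submodule A M)).restrictScalars k with hv
  have pq : p ≤ q := by
    intro x hx a ha
    exact hx a (Ideal.pow_le_pow_right (by omega) ha)
  have vu : v ≤ u := fun x hx =>
    Submodule.smul_mono_left (Ideal.pow_le_pow_right (by omega)) hx
  rw [inf_comm u q, inf_comm v q, inf_comm u p]
  have A1 := Submodule.finrank_sup_add_finrank_inf_eq (q ⊔ v) (p ⊔ u)
  have A1' : (q ⊔ v) ⊔ (p ⊔ u) = q ⊔ u :=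
    le_antisymm
      (sup_le (sup_le le_sup_left (vu.trans le_sup_right))
        (sup_le (pq.trans le_sup_left) le_sup_right))
      (sup_le (le_sup_left.trans le_sup_left) (le_sup_right.trans le_sup_right))
  rw [A1'] at A1
  have A2 := Submodule.finrank_sup_add_finrank_inf_eq (q ⊓ v) (p ⊓ u)
  have A2' : (q ⊓ v) ⊓ (p ⊓ u) = p ⊓ v :=
    le_antisymm
      (le_inf (inf_le_right.trans inf_le_left) (inf_le_left.trans inf_le_right))
      (le_inf (le_inf (inf_le_left.trans pq) inf_le_right)
        (le_inf inf_le_left (inf_le_right.trans vu)))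
  rw [A2'] at A2
  have A3 := Submodule.finrank_sup_add_finrank_inf_eq q u
  have A4 := Submodule.finrank_sup_add_finrank_inf_eq q v
  have A5 := Submodule.finrank_sup_add_finrank_inf_eq p u
  have A6 := Submodule.finrank_sup_add_finrank_inf_eq p v
  omega
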